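/- For every x ∈ X, every t ≥ 0 and every y ∈ Y one has ⟨R(0)x − R(0)T(t)x, y⟩ = ∫₀ᵗ ⟨T(s)x, y⟩ ds. Consequently the vector v_t := R(0)x − R(0)T(t)x is the weak integral ∫₀ᵗ T(s)x ds with respect to the dual pair (X,Y), it belongs to dom(A), and A v_t = T(t)x − x. -/
import Mathlib


open scoped Topology
open MeasureTheory

/-- For every `x ∈ X`, `t ≥ 0` and `y ∈ Y`:
`⟨R(0)x − R(0)T(t)x, y⟩ = ∫₀ᵗ ⟨T(s)x, y⟩ ds`; consequently
`v_t := R(0)x − R(0)T(t)x ∈ dom(A)` and `A v_t = T(t)x − x`. -/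
theorem statement4
    {X : Type*} [NormedAddCommGroup X] [NormedSpace ℂ X] [CompleteSpace X]
    (Y : Submodule ℂ (X →L[ℂ] ℂ))
    (hnorming : ∀ x : X, ‖x‖ = sSup {r : ℝ | ∃ y ∈ Y, ‖y‖ ≤ 1 ∧ r = ‖y x‖})
    (T : ℝ → X →L[ℂ] X)
    (hT0 : T 0 = 1)
    (hTsg : ∀ s t : ℝ, 0 ≤ s → 0 ≤ t → T (t + s) = (T t).comp (T s))
    (M ω : ℝ) (hM : 1 ≤ M) (hω : ω < 0)
    (hgrowth : ∀ t : ℝ, 0 ≤ t → ‖T t‖ ≤ M * Real.exp (ω * t))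
    (dom : Submodule ℂ X) (A : X → X)
    (hA_add : ∀ x ∈ dom, ∀ y ∈ dom, A (x + y) = A x + A y)
    (hA_smul : ∀ (c : ℂ), ∀ x ∈ dom, A (c • x) = c • A x)
    (R : ℝ → X →L[ℂ] X)
    (hRdom : ∀ l : ℝ, 0 ≤ l → ∀ x : X, R l x ∈ dom)
    (hR1 : ∀ l : ℝ, 0 ≤ l → ∀ x : X, (l : ℂ) • R l x - A (R l x) = x)
    (hR2 : ∀ l : ℝ, 0 ≤ l → ∀ x ∈ dom, R l ((l : ℂ) • x - A x) = x)
    (hmeas : ∀ (x : X), ∀ y ∈ Y, Measurable ((Set.Ici (0:ℝ)).restrict fun s : ℝ => y (T s x)))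
    (hlap : ∀ l : ℝ, 0 ≤ l → ∀ (x : X), ∀ y ∈ Y,
      IntegrableOn (fun s : ℝ => Real.exp (-l * s) • y (T s x)) (Set.Ioi 0) ∧
      y (R l x) = ∫ s in Set.Ioi (0:ℝ), Real.exp (-l * s) • y (T s x))
    (hcomm : ∀ t : ℝ, 0 ≤ t → (T t).comp (R 0) = (R 0).comp (T t))
    (x : X) (t : ℝ) (ht : 0 ≤ t) :
    (∀ y ∈ Y, y (R 0 x - R 0 (T t x)) = ∫ s in (0:ℝ)..t, y (T s x)) ∧
    R 0 x - R 0 (T t x) ∈ dom ∧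
    A (R 0 x - R 0 (T t x)) = T t x - x := by

  have hdom : R 0 x - R 0 (T t x) ∈ dom :=
    dom.sub_mem (hRdom 0 le_rfl x) (hRdom 0 le_rfl (T t x))
  have hA0 : ∀ z : X, A (R 0 z) = -z := by
    intro z
    have := hR1 0 le_rfl z
    simp only [Complex.ofReal_zero, zero_smul, zero_sub] at this
    linear_combination (norm := module) -this
  have hAsub : A (R 0 x - R 0 (T t x)) = T t x - x := by
    have h1 : A (R 0 x + (-1 : ℂ) • R 0 (T t x))
        = A (R 0 x) + A ((-1 : ℂ) • R 0 (T t x)) :=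
      hA_add _ (hRdom 0 le_rfl x) _ (dom.smul_mem _ (hRdom 0 le_rfl (T t x)))
    have h2 : A ((-1 : ℂ) • R 0 (T t x)) = (-1 : ℂ) • A (R 0 (T t x)) :=
      hA_smul _ _ (hRdom 0 le_rfl (T t x))
    have : R 0 x - R 0 (T t x) = R 0 x + (-1 : ℂ) • R 0 (T t x) := by module
    rw [this, h1, h2, hA0, hA0]
    module
  refine ⟨?_, hdom, hAsub⟩
  intro y hy
  set f : ℝ → ℂ := fun s => y (T s x) with hf
  have key : ∀ z : X, y (R 0 z) = ∫ s in Set.Ioi (0:ℝ), y (T s z) := by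
    intro z
    have := (hlap 0 le_rfl z y hy).2
    simpa using this
  have hint : IntegrableOn f (Set.Ioi 0) := by
    have := (hlap 0 le_rfl x y hy).1
    simpa [hf] using this
  -- change of variables for the shifted integral
  have hshift : y (R 0 (T t x)) = ∫ s in Set.Ioi t, f s := by
    rw [key (T t x)]
    have hcongr : ∫ s in Set.Ioi (0:ℝ), y (T s (T t x))
        = ∫ s in Set.Ioi (0:ℝ), f (s + t) := by
      apply MeasureTheory.setIntegral_congr_fun measurableSet_Ioi
      intro s hs
      have : T (s + t) = (T s).comp (T t) := hTsg t s ht (le_of_lt hs)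
      simp [hf, this]
    rw [hcongr]
    have hpre : (fun s : ℝ => s + t) ⁻¹' Set.Ioi t = Set.Ioi 0 := by
      ext s; simp
    have := (measurePreserving_add_right (volume : Measure ℝ) t).setIntegral_preimage_emb
      (MeasurableEquiv.addRight t).measurableEmbedding f (Set.Ioi t)
    rw [hpre] at this
    exact this
  have hsplit : (∫ s in Set.Ioi (0:ℝ), f s)
      = (∫ s in Set.Ioc (0:ℝ) t, f s) + ∫ s in Set.Ioi t, f s := by
    rw [← MeasureTheory.setIntegral_union (Set.Ioc_disjoint_Ioi le_rfl)
      measurableSet_Ioi (hint.mono_set Set.Ioc_subset_Ioi_self)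
      (hint.mono_set (fun s hs => lt_of_le_of_lt ht hs)),
      Set.Ioc_union_Ioi_eq_Ioi ht]
  rw [map_sub, key x, hshift, hsplit, intervalIntegral.integral_of_le ht]
  simp [hf, MeasureTheory.integral_Ioc_eq_integral_Ioo]
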